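/- For every regular uncountable κ, if λ is a cardinal with κ < λ < 𝔰_κ and M ≺ H(θ) has λ ⊆ M and |M| = λ, then there exists A* ∈ [κ]^κ such that for every x ∈ M ∩ P(κ), either A* ⊆* x or A* ⊆* (κ \ x); moreover the resulting filter D = {x ⊆ κ : A* ⊆* x} is a κ-complete filter on κ all of whose members have cardinality κ, containing every co-bounded subset of κ. -/

import Mathlib

open Cardinal

/-- The splitting number `𝔰_κ`. -/
noncomputable def splittingNumber (κ : Cardinal) : Cardinal :=
  sInf {c | ∃ F : Set (Set κ.ord.ToType), #↥F = c ∧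
    ∀ b : Set κ.ord.ToType, #↥b = κ →
      ∃ a ∈ F, #↥(b ∩ a) = κ ∧ #↥(b \ a) = κ}

/-- if `κ` is regular uncountable, `κ < λ < 𝔰_κ`, and `M` (modelled by its
trace on `𝒫(κ)`) has cardinality `λ`, then there is `A* ∈ [κ]^κ` unsplit by every
`x ∈ M ∩ 𝒫(κ)` (i.e. `A* ⊆* x` or `A* ⊆* κ \ x`, where `a ⊆* b` means `|a \ b| < κ`);
moreover `D = {x : A* ⊆* x}` is a κ-complete filter all of whose members have
cardinality `κ`, containing every co-bounded subset of `κ`. -/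
theorem stmt_19 (κ lam : Cardinal) (hreg : κ.IsRegular) (hκ : ℵ₀ < κ)
    (hκl : κ < lam) (hls : lam < splittingNumber κ)
    (M : Set (Set κ.ord.ToType)) (hM : #↥M = lam) :
    ∃ A : Set κ.ord.ToType, #↥A = κ ∧
      (∀ x ∈ M, #↥(A \ x) < κ ∨ #↥(A ∩ x) < κ) ∧
      (Set.univ ∈ {x : Set κ.ord.ToType | #↥(A \ x) < κ}) ∧
      (∀ x y : Set κ.ord.ToType, #↥(A \ x) < κ → x ⊆ y → #↥(A \ y) < κ) ∧
      (∀ (ι : Type) (s : ι → Set κ.ord.ToType), #ι < κ →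
        (∀ i, #↥(A \ s i) < κ) → #↥(A \ ⋂ i, s i) < κ) ∧
      (∀ x : Set κ.ord.ToType, #↥(A \ x) < κ → #↥x = κ) ∧
      (∀ δ : κ.ord.ToType, #↥(A \ Set.Ioi δ) < κ) := by
  -- `M` is not a splitting family, since its cardinality is below `𝔰_κ`.
  have hnotsplit : ¬ ∀ b : Set κ.ord.ToType, #↥b = κ →
      ∃ a ∈ M, #↥(b ∩ a) = κ ∧ #↥(b \ a) = κ := by
    intro h
    have : splittingNumber κ ≤ lam := csInf_le' ⟨M, hM, h⟩
    exact absurd hls (not_lt.2 this)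
  push_neg at hnotsplit
  obtain ⟨A, hA, hAM⟩ := hnotsplit
  -- any subset of `κ.ord.toType` has cardinality at most `κ`
  have hle : ∀ x : Set κ.ord.ToType, #↥x ≤ κ := by
    intro x
    calc #↥x ≤ #κ.ord.ToType := mk_set_le x
    _ = κ := mk_ord_toType κ
  -- if a piece of `A` is small, the complementary piece has full size `κ`
  have hpiece : ∀ x : Set κ.ord.ToType, #↥(A \ x) < κ → #↥(A ∩ x) = κ := by
    intro x hx
    refine le_antisymm (hle _) ?_
    by_contra hlt
    push_neg at hlt
    have : #↥A ≤ #↥(A \ x) + #↥(A ∩ x) := by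
      conv_lhs => rw [← Set.diff_union_inter A x]
      exact mk_union_le _ _
    rw [hA] at this
    exact absurd (this.trans_lt (add_lt_of_lt hreg.aleph0_le hx hlt)) (lt_irrefl κ)
  refine ⟨A, hA, ?_, ?_, ?_, ?_, ?_, ?_⟩
  · -- unsplit
    intro x hx
    by_cases h : #↥(A ∩ x) = κ
    · left; exact lt_of_le_of_ne (hle _) (hAM x hx h)
    · right; exact lt_of_le_of_ne (hle _) h
  · -- univ
    simp only [Set.mem_setOf_eq, Set.diff_univ, mk_emptyCollection]
    exact hreg.pos
  · -- upward closed
    intro x y hx hxy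
    exact lt_of_le_of_lt (mk_le_mk_of_subset (Set.diff_subset_diff_right hxy)) hx
  · -- κ-complete
    intro ι s hι hs
    rw [Set.diff_iInter]
    have := mk_iUnion_le (fun i => A \ s i)
    refine this.trans_lt ?_
    apply mul_lt_of_lt hreg.aleph0_le hι
    exact iSup_lt_of_isRegular hreg hι hs
  · -- members have size κ
    intro x hx
    refine le_antisymm (hle _) ?_
    calc κ = #↥(A ∩ x) := (hpiece x hx).symm
    _ ≤ #↥x := mk_le_mk_of_subset Set.inter_subset_right
  · -- co-bounded sets
    intro δ
    have hsub : A \ Set.Ioi δ ⊆ Set.Iic δ := by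
      intro a ha
      simpa using ha.2
    refine (mk_le_mk_of_subset hsub).trans_lt ?_
    have : Set.Iic δ ⊆ insert δ (Set.Iio δ) := by
      intro a ha
      rcases lt_or_eq_of_le (Set.mem_Iic.1 ha) with h | h
      · exact Set.mem_insert_of_mem _ h
      · exact h ▸ Set.mem_insert _ _
    refine (mk_le_mk_of_subset this).trans_lt ?_
    refine (mk_insert_le).trans_lt ?_
    exact add_lt_of_lt hreg.aleph0_le (mk_Iio_ord_toType δ) (one_lt_aleph0.trans hκ)
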